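/- arXiv:1705.01705 — 2 statements merged into one kernel-verified Lean document; each statement's English description precedes it below -/
import Mathlib

section
/- For every x ∈ S, the Manhattan distance from the normalized objective vector to the normalized ideal vector satisfies ‖y(x) − y_opt‖₁ = Σ_{n=1}^N f_n(x)/L_n − Σ_{n=1}^N ℓ_n/L_n. Consequently, a point x* ∈ S minimizes ‖y(x) − y_opt‖₁ over S if and only if it minimizes the weighted sum Σ_{n=1}^N f_n(x)/L_n over S. (Theorem 5: the minimum Manhattan distance approach is equivalent to the weighted-sum approach.) -/
open Finset

/-- Theorem 5: the minimum-Manhattan-distance approach is equivalent to the weighted-sum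
approach: `‖y(x) − y_opt‖₁ = ∑ f_n(x)/L_n − ∑ ℓ_n/L_n`, hence the minimizers coincide. -/
theorem mmd_equiv_weighted_sum
    {S : Type*} [Fintype S] [Nonempty S] {N : ℕ}
    (f : Fin N → S → ℝ) (L ℓ : Fin N → ℝ)
    (hL : ∀ n, L n = univ.sup' univ_nonempty (f n) - univ.inf' univ_nonempty (f n))
    (hLpos : ∀ n, 0 < L n)
    (hℓ : ∀ n, ℓ n = univ.inf' univ_nonempty (f n)) :
    (∀ x : S, ∑ n, |f n x / L n - ℓ n / L n| =
        ∑ n, f n x / L n - ∑ n, ℓ n / L n) ∧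
    (∀ xstar : S,
      (∀ x : S, ∑ n, |f n xstar / L n - ℓ n / L n| ≤ ∑ n, |f n x / L n - ℓ n / L n|) ↔
      (∀ x : S, ∑ n, f n xstar / L n ≤ ∑ n, f n x / L n)) := by
  have key : ∀ x : S, ∑ n, |f n x / L n - ℓ n / L n| =
      ∑ n, f n x / L n - ∑ n, ℓ n / L n := by
    intro x
    rw [← Finset.sum_sub_distrib]
    refine Finset.sum_congr rfl fun n _ => ?_
    rw [abs_of_nonneg]
    have h1 : ℓ n ≤ f n x := by
      rw [hℓ]; exact Finset.inf'_le _ (Finset.mem_univ x)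
    have := (hLpos n).le
    have : ℓ n / L n ≤ f n x / L n := by gcongr
    linarith
  refine ⟨key, fun xstar => ?_⟩
  constructor <;> intro h x <;> have := h x <;> rw [key, key] at * <;> linarith
end

section
/- For a two-objective problem (N = 2) with S mutually nondominated, both extreme solutions attain Manhattan distance exactly 1 from the normalized ideal vector: if x₁ ∈ S minimizes f_1 over S and x₂ ∈ S minimizes f_2 over S, then ‖y(x₁) − y_opt‖₁ = 1 and ‖y(x₂) − y_opt‖₁ = 1. -/
open Finset

/-- For a two-objective problem with a mutually nondominated set `S`, both extreme
solutions have Manhattan distance exactly `1` from the normalized ideal vector. -/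
theorem extreme_solutions_have_unit_distance
    {S : Type*} [Fintype S] [Nonempty S]
    (f₁ f₂ : S → ℝ)
    (hnd : ∀ x' x'' : S, x' ≠ x'' →
      ¬ (f₁ x' ≤ f₁ x'' ∧ f₂ x' ≤ f₂ x'' ∧ (f₁ x' < f₁ x'' ∨ f₂ x' < f₂ x'')))
    (L₁ L₂ ℓ₁ ℓ₂ : ℝ)
    (hL₁ : L₁ = univ.sup' univ_nonempty f₁ - univ.inf' univ_nonempty f₁)
    (hL₂ : L₂ = univ.sup' univ_nonempty f₂ - univ.inf' univ_nonempty f₂)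
    (hL₁pos : 0 < L₁) (hL₂pos : 0 < L₂)
    (hℓ₁ : ℓ₁ = univ.inf' univ_nonempty f₁)
    (hℓ₂ : ℓ₂ = univ.inf' univ_nonempty f₂)
    (x₁ x₂ : S)
    (hx₁ : ∀ x : S, f₁ x₁ ≤ f₁ x)
    (hx₂ : ∀ x : S, f₂ x₂ ≤ f₂ x) :
    |f₁ x₁ / L₁ - ℓ₁ / L₁| + |f₂ x₁ / L₂ - ℓ₂ / L₂| = 1 ∧
    |f₁ x₂ / L₁ - ℓ₁ / L₁| + |f₂ x₂ / L₂ - ℓ₂ / L₂| = 1 := by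
  -- f₂ is maximized at x₁
  have hmax₂ : ∀ x : S, f₂ x ≤ f₂ x₁ := by
    intro x
    rcases eq_or_ne x₁ x with h | h
    · exact (h ▸ le_refl _)
    · have := hnd x₁ x h
      push_neg at this
      by_contra hlt
      push_neg at hlt
      exact absurd hlt (not_lt.mpr (this (hx₁ x) hlt.le).2)
  have hmax₁ : ∀ x : S, f₁ x ≤ f₁ x₂ := by
    intro x
    rcases eq_or_ne x₂ x with h | h
    · exact (h ▸ le_refl _)
    · have := hnd x₂ x h
      push_neg at this
      by_contra hlt
      push_neg at hlt
      exact absurd hlt (not_lt.mpr (this hlt.le (hx₂ x)).1)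
  have hinf₁ : univ.inf' univ_nonempty f₁ = f₁ x₁ :=
    le_antisymm (inf'_le _ (mem_univ _)) (le_inf' _ _ fun x _ => hx₁ x)
  have hinf₂ : univ.inf' univ_nonempty f₂ = f₂ x₂ :=
    le_antisymm (inf'_le _ (mem_univ _)) (le_inf' _ _ fun x _ => hx₂ x)
  have hsup₂ : univ.sup' univ_nonempty f₂ = f₂ x₁ :=
    le_antisymm (sup'_le _ _ fun x _ => hmax₂ x) (le_sup' _ (mem_univ _))
  have hsup₁ : univ.sup' univ_nonempty f₁ = f₁ x₂ :=
    le_antisymm (sup'_le _ _ fun x _ => hmax₁ x) (le_sup' _ (mem_univ _))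
  subst hL₁ hL₂ hℓ₁ hℓ₂
  rw [hinf₁, hinf₂, hsup₁, hsup₂] at *
  constructor
  · rw [sub_self, abs_zero, zero_add, div_sub_div_same, div_self hL₂pos.ne', abs_one]
  · rw [sub_self (f₂ x₂ / _), abs_zero, add_zero, div_sub_div_same, div_self hL₁pos.ne', abs_one]
end
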